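/- arXiv:1602.07850 — 6 statements merged into one kernel-verified Lean document; each statement's English description precedes it below -/
import Mathlib

section
/- For every nonnegative integer n, the sum over k from 0 to 2n of (-1)^k times the q-binomial coefficient (2n choose k)_q equals the q-Pochhammer symbol (q; q^2)_n = prod_{j=0}^{n-1}(1 - q^{2j+1}) (Gauss's identity). -/
open Finset

/-- Gaussian (q-)binomial coefficient, defined over any commutative ring by the
Pascal-type recurrence `[n+1, k+1] = [n, k] + q^(k+1) * [n, k+1]`. -/
def qbinom {R : Type*} [CommRing R] (q : R) : ℕ → ℕ → R
  | _, 0 => 1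
  | 0, _ + 1 => 0
  | n + 1, k + 1 => qbinom q n k + q ^ (k + 1) * qbinom q n (k + 1)

namespace GaussAux

variable {R : Type*} [CommRing R]

lemma qbinom_succ (q : R) (n k : ℕ) :
    qbinom q (n + 1) (k + 1) = qbinom q n k + q ^ (k + 1) * qbinom q n (k + 1) := rfl

lemma qbinom_zero_right (q : R) (n : ℕ) : qbinom q n 0 = 1 := by cases n <;> rfl

lemma qbinom_eq_zero (q : R) : ∀ n k : ℕ, n < k → qbinom q n k = 0
  | 0, _ + 1, _ => rfl
  | n + 1, k + 1, h => by
    rw [qbinom_succ, qbinom_eq_zero q n k (by omega), qbinom_eq_zero q n (k + 1) (by omega)]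
    ring

lemma qbinom_self (q : R) : ∀ n : ℕ, qbinom q n n = 1
  | 0 => rfl
  | n + 1 => by
    rw [qbinom_succ, qbinom_self q n, qbinom_eq_zero q n (n + 1) (by omega)]
    ring

lemma pascal' (q : R) : ∀ n k : ℕ, k ≤ n →
    qbinom q (n + 1) (k + 1) = q ^ (n - k) * qbinom q n k + qbinom q n (k + 1)
  | 0, 0, _ => by simp [qbinom_succ, qbinom_zero_right, qbinom_eq_zero q 0 1 one_pos]
  | n + 1, 0, _ => by
    have ih := pascal' q n 0 (Nat.zero_le n)
    conv_lhs => rw [qbinom_succ q (n + 1) 0, ih]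
    conv_rhs => rw [qbinom_succ q n 0]
    simp only [qbinom_zero_right, Nat.sub_zero]
    ring
  | n + 1, k + 1, h => by
    rcases eq_or_lt_of_le h with heq | hlt
    · have hk : k = n := by omega
      subst hk
      rw [qbinom_self, qbinom_self, qbinom_eq_zero q (k + 1) (k + 2) (by omega)]
      simp
    · have hkn : k ≤ n := by omega
      have ih1 := pascal' q n k hkn
      have ih2 := pascal' q n (k + 1) (by omega)
      have e : q ^ (k + 1 + 1) * q ^ (n - (k + 1)) = q ^ (n - k) * q ^ (k + 1) := by
        rw [← pow_add, ← pow_add]; congr 1; omega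
      rw [show (n + 1) - (k + 1) = n - k from by omega]
      conv_lhs => rw [qbinom_succ q (n + 1) (k + 1), ih1, ih2]
      conv_rhs => rw [qbinom_succ q n k, qbinom_succ q n (k + 1)]
      linear_combination qbinom q n (k + 1) * e

def A (q : R) (m : ℕ) : R := ∑ k ∈ range (m + 1), (-1 : R) ^ k * qbinom q m k

def T (q : R) (m : ℕ) : R := ∑ k ∈ range (m + 1), (-1 : R) ^ k * q ^ k * qbinom q m k

lemma shift (q : R) (m : ℕ) :
    ∑ k ∈ range (m + 1), (-1 : R) ^ (k + 1) * q ^ (k + 1) * qbinom q m (k + 1) = T q m - 1 := by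
  rw [sum_range_succ, qbinom_eq_zero q m (m + 1) (by omega), mul_zero, add_zero, T,
    sum_range_succ']
  simp [qbinom_zero_right]

lemma A_succ (q : R) (m : ℕ) : A q (m + 1) = T q m - A q m := by
  rw [A, sum_range_succ']
  simp only [qbinom_succ, qbinom_zero_right, pow_zero, mul_one, one_mul]
  have h : ∀ k ∈ range (m + 1),
      (-1 : R) ^ (k + 1) * (qbinom q m k + q ^ (k + 1) * qbinom q m (k + 1))
      = -((-1 : R) ^ k * qbinom q m k) + (-1 : R) ^ (k + 1) * q ^ (k + 1) * qbinom q m (k + 1) := by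
    intro k _; ring
  rw [sum_congr rfl h, sum_add_distrib, shift, sum_neg_distrib,
    show (∑ k ∈ range (m + 1), (-1 : R) ^ k * qbinom q m k) = A q m from rfl]
  ring

lemma T_succ (q : R) (m : ℕ) : T q (m + 1) = T q m - q ^ (m + 1) * A q m := by
  rw [T, sum_range_succ']
  have h : ∀ k ∈ range (m + 1),
      (-1 : R) ^ (k + 1) * q ^ (k + 1) * qbinom q (m + 1) (k + 1)
      = -(q ^ (m + 1) * ((-1 : R) ^ k * qbinom q m k))
        + (-1 : R) ^ (k + 1) * q ^ (k + 1) * qbinom q m (k + 1) := by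
    intro k hk
    rw [mem_range] at hk
    rw [pascal' q m k (by omega)]
    have e : q ^ (k + 1) * q ^ (m - k) = q ^ (m + 1) := by
      rw [← pow_add]; congr 1; omega
    linear_combination ((-1 : R) ^ (k + 1) * qbinom q m k) * e
  rw [sum_congr rfl h, sum_add_distrib, shift, sum_neg_distrib, ← mul_sum,
    show (∑ k ∈ range (m + 1), (-1 : R) ^ k * qbinom q m k) = A q m from rfl]
  simp [qbinom_zero_right]
  ring

lemma key (q : R) (n : ℕ) :
    A q (2 * n) = (∏ j ∈ range n, (1 - q ^ (2 * j + 1))) ∧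
    T q (2 * n) = (∏ j ∈ range n, (1 - q ^ (2 * j + 1))) := by
  induction n with
  | zero => constructor <;> simp [A, T, qbinom_zero_right]
  | succ n ih =>
    obtain ⟨hA, hT⟩ := ih
    have h2 : 2 * (n + 1) = 2 * n + 1 + 1 := by ring
    have hA1 : A q (2 * n + 1) = 0 := by rw [A_succ, hA, hT]; ring
    have hT1 : T q (2 * n + 1) = ∏ j ∈ range (n + 1), (1 - q ^ (2 * j + 1)) := by
      rw [T_succ, hA, hT, prod_range_succ]; ring
    constructor
    · rw [h2, A_succ, hA1, hT1]; ring
    · rw [h2, T_succ, hA1, hT1]; ring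

end GaussAux

theorem stmt1 {R : Type*} [CommRing R] (q : R) (n : ℕ) :
    ∑ k ∈ Finset.range (2 * n + 1), (-1 : R) ^ k * qbinom q (2 * n) k =
      ∏ j ∈ Finset.range n, (1 - q ^ (2 * j + 1)) := by
  exact (GaussAux.key q n).1
end

section
/- For every nonnegative integer n, the sum over k from 0 to n of (-q)^k times the q-binomial coefficient (n choose k)_q equals (q; q^2)_{floor((n+1)/2)} = prod_{j=0}^{floor((n+1)/2)-1}(1 - q^{2j+1}). -/
open Finset

lemma qbinom_zero_right {R : Type*} [CommRing R] (q : R) (n : ℕ) : qbinom q n 0 = 1 := by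
  cases n <;> rfl

lemma qbinom_succ_succ {R : Type*} [CommRing R] (q : R) (n k : ℕ) :
    qbinom q (n + 1) (k + 1) = qbinom q n k + q ^ (k + 1) * qbinom q n (k + 1) := rfl

lemma qbinom_eq_zero {R : Type*} [CommRing R] (q : R) :
    ∀ n k : ℕ, n < k → qbinom q n k = 0 := by
  intro n
  induction n with
  | zero =>
    intro k hk
    match k, hk with
    | k + 1, _ => rfl
  | succ n ih =>
    intro k hk
    match k, hk with
    | k + 1, hk =>
      rw [qbinom_succ_succ, ih k (by omega), ih (k + 1) (by omega)]; ring

lemma qbinom_pascal2 {R : Type*} [CommRing R] (q : R) :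
    ∀ n k : ℕ, k ≤ n →
      qbinom q (n + 1) (k + 1) = q ^ (n - k) * qbinom q n k + qbinom q n (k + 1) := by
  intro n
  induction n with
  | zero =>
    intro k hk
    interval_cases k
    rw [qbinom_succ_succ]
    simp [qbinom]
  | succ n ih =>
    intro k hk
    match k with
    | 0 =>
      conv_lhs => rw [qbinom_succ_succ, ih 0 (Nat.zero_le n), qbinom_zero_right,
        qbinom_zero_right]
      conv_rhs => rw [qbinom_succ_succ, qbinom_zero_right, qbinom_zero_right]
      simp only [Nat.sub_zero, zero_add, pow_one]
      have h : q * q ^ n = q ^ (n + 1) := by rw [← pow_succ']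
      linear_combination h
    | j + 1 =>
      have hj : j ≤ n := Nat.lt_succ_iff.mp hk
      rcases eq_or_lt_of_le hj with hje | hjlt
      · subst hje
        rw [qbinom_succ_succ q (j + 1) (j + 1),
          qbinom_eq_zero q (j + 1) (j + 2) (by omega), Nat.sub_self, pow_zero]
        ring
      · have hj1 : j + 1 ≤ n := hjlt
        conv_lhs => rw [qbinom_succ_succ q (n + 1) (j + 1), ih j hj, ih (j + 1) hj1]
        conv_rhs => rw [qbinom_succ_succ q n j, qbinom_succ_succ q n (j + 1),
          show n + 1 - (j + 1) = n - j from by omega]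
        have hx : (q : R) ^ (j + 2) * q ^ (n - (j + 1)) = q ^ (n - j) * q ^ (j + 1) := by
          rw [← pow_add, ← pow_add]; congr 1; omega
        linear_combination (qbinom q n (j + 1)) * hx

def qaltS {R : Type*} [CommRing R] (q : R) (n : ℕ) : R :=
  ∑ k ∈ Finset.range (n + 1), (-q) ^ k * qbinom q n k

def qaltB {R : Type*} [CommRing R] (q : R) (n : ℕ) : R :=
  ∑ k ∈ Finset.range (n + 1), (-1) ^ k * qbinom q n k

lemma qalt_tail {R : Type*} [CommRing R] (q : R) (n : ℕ) :
    ∑ i ∈ Finset.range (n + 1), (-q) ^ (i + 1) * qbinom q n (i + 1) = qaltS q n - 1 := by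
  have h1 := Finset.sum_range_succ' (fun k => (-q) ^ k * qbinom q n k) (n + 1)
  have h2 := Finset.sum_range_succ (fun k => (-q) ^ k * qbinom q n k) (n + 1)
  simp only [qbinom_zero_right, pow_zero, one_mul,
    qbinom_eq_zero q n (n + 1) (Nat.lt_succ_self n), mul_zero, add_zero] at h1 h2
  rw [h2] at h1
  rw [qaltS]
  linear_combination -h1

lemma qaltS_succ {R : Type*} [CommRing R] (q : R) (n : ℕ) :
    qaltS q (n + 1) = qaltS q n - q ^ (n + 1) * qaltB q n := by
  rw [qaltS, Finset.sum_range_succ' (fun k => (-q) ^ k * qbinom q (n + 1) k) (n + 1)]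
  simp only [qbinom_zero_right, pow_zero, one_mul]
  have h1 : ∀ i ∈ Finset.range (n + 1), (-q) ^ (i + 1) * qbinom q (n + 1) (i + 1) =
      -(q ^ (n + 1)) * ((-1) ^ i * qbinom q n i) + (-q) ^ (i + 1) * qbinom q n (i + 1) := by
    intro i hi
    have hin : i ≤ n := Nat.lt_succ_iff.mp (Finset.mem_range.mp hi)
    rw [qbinom_pascal2 q n i hin]
    have hq : (q : R) ^ (i + 1) * q ^ (n - i) = q ^ (n + 1) := by
      rw [← pow_add]; congr 1; omega
    have hs : ((-q : R)) ^ (i + 1) = -((-1) ^ i * q ^ (i + 1)) := by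
      rw [neg_pow, pow_succ]; ring
    rw [hs]
    linear_combination (-((-1 : R) ^ i) * qbinom q n i) * hq
  rw [Finset.sum_congr rfl h1, Finset.sum_add_distrib, ← Finset.mul_sum, qalt_tail]
  rw [qaltB]
  ring

lemma qaltB_succ {R : Type*} [CommRing R] (q : R) (n : ℕ) :
    qaltB q (n + 1) = qaltS q n - qaltB q n := by
  rw [qaltB, Finset.sum_range_succ' (fun k => (-1 : R) ^ k * qbinom q (n + 1) k) (n + 1)]
  simp only [qbinom_zero_right, pow_zero, one_mul]
  have h1 : ∀ i ∈ Finset.range (n + 1), (-1 : R) ^ (i + 1) * qbinom q (n + 1) (i + 1) =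
      -((-1) ^ i * qbinom q n i) + (-q) ^ (i + 1) * qbinom q n (i + 1) := by
    intro i _
    rw [qbinom_succ_succ]
    have hs : ((-q : R)) ^ (i + 1) = (-1) ^ (i + 1) * q ^ (i + 1) := by rw [neg_pow]
    rw [hs, pow_succ]
    ring
  have hb : ∑ x ∈ Finset.range (n + 1), (-1 : R) ^ x * qbinom q n x = qaltB q n := rfl
  have hn : ∑ x ∈ Finset.range (n + 1), -((-1 : R) ^ x * qbinom q n x) = -qaltB q n := by
    rw [← hb]; exact Finset.sum_neg_distrib _
  rw [Finset.sum_congr rfl h1, Finset.sum_add_distrib, qalt_tail, hn]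
  ring

lemma qalt_key {R : Type*} [CommRing R] (q : R) :
    ∀ m : ℕ, qaltS q (2 * m) = ∏ j ∈ Finset.range m, (1 - q ^ (2 * j + 1)) ∧
      qaltB q (2 * m) = ∏ j ∈ Finset.range m, (1 - q ^ (2 * j + 1)) := by
  intro m
  induction m with
  | zero => constructor <;> simp [qaltS, qaltB, qbinom]
  | succ m ih =>
    obtain ⟨hS, hB⟩ := ih
    have e : 2 * (m + 1) = (2 * m + 1) + 1 := by ring
    have hS1 : qaltS q (2 * m + 1) = (∏ j ∈ Finset.range m, (1 - q ^ (2 * j + 1))) *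
        (1 - q ^ (2 * m + 1)) := by
      rw [qaltS_succ, hS, hB]; ring
    have hB1 : qaltB q (2 * m + 1) = 0 := by
      rw [qaltB_succ, hS, hB]; ring
    rw [e]
    constructor
    · rw [qaltS_succ, hS1, hB1, Finset.prod_range_succ]; ring
    · rw [qaltB_succ, hS1, hB1, Finset.prod_range_succ]; ring

theorem stmt2 {R : Type*} [CommRing R] (q : R) (n : ℕ) :
    ∑ k ∈ Finset.range (n + 1), (-q) ^ k * qbinom q n k =
      ∏ j ∈ Finset.range ((n + 1) / 2), (1 - q ^ (2 * j + 1)) := by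
  show qaltS q n = _
  rcases Nat.even_or_odd n with ⟨m, hm⟩ | ⟨m, hm⟩
  · have h2 : (n + 1) / 2 = m := by omega
    rw [h2, show n = 2 * m from by omega, (qalt_key q m).1]
  · have h2 : (n + 1) / 2 = m + 1 := by omega
    rw [h2, show n = 2 * m + 1 from by omega, qaltS_succ, (qalt_key q m).1,
      (qalt_key q m).2, Finset.prod_range_succ]
    ring
end

section
/- The Rogers-Szegő polynomials satisfy the second-order even-step recurrence r_n(s,q) = (1 + (1+q) q^{n-2} s + s^2) r_{n-2}(s,q) - (1 - q^{n-3})(1 - q^{n-2}) s^2 r_{n-4}(s,q) for n >= 4. -/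
open Finset

/-- Rogers-Szegő polynomial `r_n(s,q) = ∑_{j=0}^n [n,j]_q s^j`. -/
def rs {R : Type*} [CommRing R] (n : ℕ) (s q : R) : R :=
  ∑ j ∈ Finset.range (n + 1), qbinom q n j * s ^ j

lemma qbinom_one {R : Type*} [CommRing R] (q : R) :
    ∀ n : ℕ, qbinom q n 1 = ∑ i ∈ Finset.range n, q ^ i := by
  intro n
  induction n with
  | zero => rfl
  | succ n ih =>
    show qbinom q n 0 + q ^ 1 * qbinom q n 1 = _
    have h0 : qbinom q n 0 = 1 := by cases n <;> rfl
    rw [ih, h0, Finset.sum_range_succ', Finset.mul_sum, add_comm]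
    congr 1
    · apply Finset.sum_congr rfl
      intro i _
      ring
    · norm_num

lemma qbinom_mul {R : Type*} [CommRing R] (q : R) :
    ∀ n k : ℕ, (1 - q ^ (k + 1)) * qbinom q (n + 1) (k + 1) = (1 - q ^ (n + 1)) * qbinom q n k := by
  intro n
  induction n with
  | zero =>
    intro k
    match k with
    | 0 =>
      show (1 - q ^ 1) * (qbinom q 0 0 + q ^ 1 * qbinom q 0 1) = (1 - q ^ 1) * qbinom q 0 0
      show (1 - q ^ 1) * (1 + q ^ 1 * 0) = (1 - q ^ 1) * 1
      ring
    | k + 1 =>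
      show (1 - q ^ (k + 2)) * (qbinom q 0 (k + 1) + q ^ (k + 2) * qbinom q 0 (k + 2))
          = (1 - q ^ 1) * qbinom q 0 (k + 1)
      show (1 - q ^ (k + 2)) * (0 + q ^ (k + 2) * 0) = (1 - q ^ 1) * 0
      ring
  | succ n ih =>
    intro k
    match k with
    | 0 =>
      show (1 - q ^ 1) * qbinom q (n + 2) 1 = (1 - q ^ (n + 2)) * 1
      rw [qbinom_one]
      have g := geom_sum_mul q (n + 2)
      linear_combination -g
    | j + 1 =>
      have P0 : qbinom q (n + 2) (j + 2)
          = qbinom q (n + 1) (j + 1) + q ^ (j + 2) * qbinom q (n + 1) (j + 2) := rfl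
      have P1 : qbinom q (n + 1) (j + 1)
          = qbinom q n j + q ^ (j + 1) * qbinom q n (j + 1) := rfl
      have I1 := ih j
      have I2 := ih (j + 1)
      linear_combination (1 - q ^ (j + 2)) * P0 + q ^ (j + 2) * I2 + q * I1
        - q * (1 - q ^ (n + 1)) * P1

lemma rs_step {R : Type*} [CommRing R] (s q : R) (n : ℕ) :
    rs (n + 2) s q = (1 + s) * rs (n + 1) s q - (1 - q ^ (n + 1)) * s * rs n s q := by
  have hz1 : qbinom q (n + 1) (n + 2) = 0 := qbinom_eq_zero q _ _ (by omega)
  have hz2 : qbinom q n (n + 1) = 0 := qbinom_eq_zero q _ _ (by omega)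
  have hA : rs (n + 2) s q
      = (∑ i ∈ Finset.range (n + 2),
          (qbinom q (n + 1) i * s ^ i * s
            + q ^ (i + 1) * qbinom q (n + 1) (i + 1) * s ^ (i + 1))) + 1 := by
    rw [rs, Finset.sum_range_succ']
    show (∑ i ∈ Finset.range (n + 2), qbinom q (n + 2) (i + 1) * s ^ (i + 1))
        + qbinom q (n + 2) 0 * s ^ 0 = _
    show (∑ i ∈ Finset.range (n + 2), qbinom q (n + 2) (i + 1) * s ^ (i + 1)) + 1 * s ^ 0 = _
    rw [pow_zero, mul_one]
    congr 1
    apply Finset.sum_congr rfl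
    intro i _
    show (qbinom q (n + 1) i + q ^ (i + 1) * qbinom q (n + 1) (i + 1)) * s ^ (i + 1) = _
    ring
  have hB : (∑ i ∈ Finset.range (n + 2), qbinom q (n + 1) (i + 1) * s ^ (i + 1))
      = rs (n + 1) s q - 1 := by
    rw [Finset.sum_range_succ _ (n + 1), hz1, rs,
      Finset.sum_range_succ' (fun j => qbinom q (n + 1) j * s ^ j) (n + 1)]
    norm_num [qbinom]
  have hC : rs n s q = ∑ i ∈ Finset.range (n + 2), qbinom q n i * s ^ i := by
    rw [rs, Finset.sum_range_succ _ (n + 1), hz2]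
    simp
  have hD : rs (n + 1) s q = ∑ i ∈ Finset.range (n + 2), qbinom q (n + 1) i * s ^ i := rfl
  have key : (∑ i ∈ Finset.range (n + 2), q ^ (i + 1) * qbinom q (n + 1) (i + 1) * s ^ (i + 1))
      = ∑ i ∈ Finset.range (n + 2),
          (qbinom q (n + 1) (i + 1) * s ^ (i + 1)
            - (1 - q ^ (n + 1)) * (qbinom q n i * s ^ i) * s) := by
    apply Finset.sum_congr rfl
    intro i _
    linear_combination (-(s ^ (i + 1))) * qbinom_mul q n i
  rw [hA, Finset.sum_add_distrib, key, Finset.sum_sub_distrib]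
  have hE : (∑ i ∈ Finset.range (n + 2), qbinom q (n + 1) i * s ^ i * s)
      = rs (n + 1) s q * s := by
    rw [hD, Finset.sum_mul]
  have hF : (∑ i ∈ Finset.range (n + 2), (1 - q ^ (n + 1)) * (qbinom q n i * s ^ i) * s)
      = (1 - q ^ (n + 1)) * rs n s q * s := by
    rw [hC, Finset.mul_sum, Finset.sum_mul]
  rw [hB, hE, hF]
  ring

theorem stmt5 {R : Type*} [CommRing R] (s q : R) (n : ℕ) (hn : 4 ≤ n) :
    rs n s q = (1 + (1 + q) * q ^ (n - 2) * s + s ^ 2) * rs (n - 2) s q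
      - (1 - q ^ (n - 3)) * (1 - q ^ (n - 2)) * s ^ 2 * rs (n - 4) s q := by
  obtain ⟨m, rfl⟩ := Nat.exists_eq_add_of_le' hn
  have e2 : m + 4 - 2 = m + 2 := by omega
  have e3 : m + 4 - 3 = m + 1 := by omega
  have e4 : m + 4 - 4 = m := by omega
  rw [e2, e3, e4]
  have h1 := rs_step s q (m + 2)
  have h2 := rs_step s q (m + 1)
  have h3 := rs_step s q m
  norm_num at h1 h2 h3 ⊢
  linear_combination h1 + (1 + s) * h2 + (1 - q ^ (m + 2)) * s * h3
end

section
/- For all n and all s, q: r_n(q^2 s, q) = (1 - q s) r_n(q s, q) + q^{n+1} s r_n(s, q), where r_n(s,q) is the Rogers-Szegő polynomial. -/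
open Finset

lemma qbinom_zero_of_lt {R : Type*} [CommRing R] (q : R) :
    ∀ n k, n < k → qbinom q n k = 0 := by
  intro n
  induction n with
  | zero =>
    intro k hk
    match k, hk with
    | k + 1, _ => rfl
  | succ n ih =>
    intro k hk
    match k, hk with
    | k + 1, hk =>
      show qbinom q n k + q ^ (k + 1) * qbinom q n (k + 1) = 0
      rw [ih k (by omega), ih (k + 1) (by omega)]
      ring

lemma rs_succ {R : Type*} [CommRing R] (n : ℕ) (s q : R) :
    rs (n + 1) s q = rs n (q * s) q + s * rs n s q := by
  unfold rs
  rw [Finset.sum_range_succ' (fun j => qbinom q (n + 1) j * s ^ j)]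
  have hrec : ∀ j, qbinom q (n + 1) (j + 1)
      = qbinom q n j + q ^ (j + 1) * qbinom q n (j + 1) := fun j => rfl
  simp only [hrec, add_mul, Finset.sum_add_distrib]
  rw [Finset.sum_range_succ (fun j => q ^ (j + 1) * qbinom q n (j + 1) * s ^ (j + 1)),
    qbinom_zero_of_lt q n (n + 1) (by omega)]
  rw [Finset.sum_range_succ' (fun j => qbinom q n j * (q * s) ^ j)]
  rw [Finset.mul_sum]
  simp only [qbinom, pow_succ, mul_pow, pow_zero, mul_one, mul_zero, zero_mul, add_zero]
  rw [Finset.sum_congr rfl (fun x _ => by ring :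
        ∀ x ∈ range (n + 1), qbinom q n x * (s ^ x * s) = s * (qbinom q n x * s ^ x)),
    Finset.sum_congr rfl (fun x _ => by ring :
        ∀ x ∈ range n, q ^ x * q * qbinom q n (x + 1) * (s ^ x * s)
          = qbinom q n (x + 1) * (q ^ x * s ^ x * (q * s)))]
  ring

theorem stmt6 {R : Type*} [CommRing R] (s q : R) (n : ℕ) :
    rs n (q ^ 2 * s) q = (1 - q * s) * rs n (q * s) q + q ^ (n + 1) * s * rs n s q := by
  induction n generalizing s with
  | zero => simp [rs, qbinom]
  | succ n ih =>
    have h1 := ih s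
    have h2 := ih (q * s)
    rw [show q ^ 2 * (q * s) = q * (q ^ 2 * s) from by ring,
      show q * (q * s) = q ^ 2 * s from by ring] at h2
    rw [rs_succ, rs_succ, rs_succ,
      show q * (q * s) = q ^ 2 * s from by ring]
    linear_combination h2 + (q * s) * h1
end

section
/- For all nonnegative integers n: r_n(s, q^2) = sum_{j=0}^{floor(n/2)} (-1)^j q^{j^2} (q; q^2)_j (n choose 2j)_q s^j r_{n-2j}(s, q), where r_m(s, q^2) = sum_{k=0}^m (m choose k)_{q^2} s^k. -/
open Finset

namespace Stmt11Aux

variable {R : Type*} [CommRing R]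

lemma qb_zero (q : R) (n : ℕ) : qbinom q n 0 = 1 := by cases n <;> rfl

lemma qb_zero_row (q : R) (k : ℕ) : qbinom q 0 (k + 1) = 0 := rfl

lemma qb_succ (q : R) (n k : ℕ) :
    qbinom q (n + 1) (k + 1) = qbinom q n k + q ^ (k + 1) * qbinom q n (k + 1) := rfl

lemma qb_eq_zero (q : R) : ∀ n k : ℕ, n < k → qbinom q n k = 0 := by
  intro n
  induction n with
  | zero =>
    intro k hk
    match k, hk with
    | k + 1, _ => rfl
  | succ n ih =>
    intro k hk
    match k, hk with
    | k + 1, hk =>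
      rw [qb_succ, ih k (by omega), ih (k + 1) (by omega)]
      ring

lemma qb_self (q : R) : ∀ n : ℕ, qbinom q n n = 1 := by
  intro n
  induction n with
  | zero => rfl
  | succ n ih =>
    rw [qb_succ, ih, qb_eq_zero q n (n + 1) (by omega)]
    ring

lemma absorb (q : R) : ∀ n k : ℕ, (1 - q ^ (k + 1)) * qbinom q n (k + 1)
    = (1 - q ^ (n - k)) * qbinom q n k := by
  intro n
  induction n with
  | zero =>
    intro k
    cases k with
    | zero => simp [qb_zero_row, qb_zero]
    | succ k => simp [qb_zero_row]
  | succ n ih =>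
    intro k
    cases k with
    | zero =>
      have h := ih 0
      rw [Nat.sub_zero] at h
      rw [qb_succ, qb_zero, qb_zero, Nat.sub_zero]
      rw [qb_zero] at h
      linear_combination (q : R) ^ 1 * h
    | succ k =>
      rcases le_or_gt (k + 1) n with hle | hlt
      · obtain ⟨t, rfl⟩ : ∃ t, n = k + 1 + t := ⟨n - (k + 1), by omega⟩
        have h1 := ih (k + 1)
        rw [show k + 1 + t - (k + 1) = t from by omega] at h1
        have h2 := ih k
        rw [show k + 1 + t - k = t + 1 from by omega] at h2
        rw [show k + 1 + t + 1 - (k + 1) = t + 1 from by omega]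
        rw [qb_succ q (k + 1 + t) (k + 1), qb_succ q (k + 1 + t) k]
        linear_combination (q : R) ^ (k + 2) * h1 + h2
      · rw [qb_eq_zero q (n + 1) (k + 2) (by omega),
          show n + 1 - (k + 1) = 0 from by omega]
        simp

lemma absorb2 (q : R) : ∀ n k : ℕ, (1 - q ^ (n + 1 - k)) * qbinom q (n + 1) k
    = (1 - q ^ (n + 1)) * qbinom q n k := by
  intro n
  induction n with
  | zero =>
    intro k
    cases k with
    | zero => rw [Nat.sub_zero, qb_zero, qb_zero]
    | succ k =>
      rw [show 0 + 1 - (k + 1) = 0 from by omega, qb_zero_row]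
      simp
  | succ n ih =>
    intro k
    cases k with
    | zero => rw [Nat.sub_zero, qb_zero, qb_zero]
    | succ k =>
      rcases le_or_gt k n with hle | hlt
      · obtain ⟨t, rfl⟩ : ∃ t, n = k + t := ⟨n - k, by omega⟩
        have h1 := ih k
        rw [show k + t + 1 - k = t + 1 from by omega] at h1
        have h2 := ih (k + 1)
        rw [show k + t + 1 - (k + 1) = t from by omega] at h2
        rw [show k + t + 1 + 1 - (k + 1) = t + 1 from by omega]
        rw [qb_succ q (k + t + 1) k, qb_succ q (k + t) k] at *
        linear_combination h1 + (q : R) ^ (k + 1) * h2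
      · rw [show n + 1 + 1 - (k + 1) = 0 from by omega,
          qb_eq_zero q (n + 1) (k + 1) (by omega)]
        simp

lemma absorbP (q : R) (n k : ℕ) : (1 - q ^ (k + 1)) * qbinom q (n + 1) (k + 1)
    = (1 - q ^ (n + 1)) * qbinom q n k := by
  have h1 := absorb q (n + 1) k
  have h2 := absorb2 q n k
  rw [h1, h2]

/-- The coefficient `(-1)^j q^(j^2) (q;q^2)_j`. -/
def dd (q : R) (j : ℕ) : R := (-1) ^ j * q ^ (j ^ 2) * ∏ i ∈ range j, (1 - q ^ (2 * i + 1))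

lemma dd_zero (q : R) : dd q 0 = 1 := by simp [dd]

lemma dd_succ (q : R) (j : ℕ) :
    dd q (j + 1) = -(q ^ (2 * j + 1) * (1 - q ^ (2 * j + 1))) * dd q j := by
  unfold dd
  rw [prod_range_succ, show (j + 1) ^ 2 = j ^ 2 + (2 * j + 1) from by ring, pow_add,
    pow_succ]
  ring

/-- The inner coefficient sum. -/
def SS (q : R) (n k : ℕ) : R :=
  ∑ j ∈ range (k + 1), dd q j * qbinom q n (2 * j) * qbinom q (n - 2 * j) (k - j)

lemma SS_zero (q : R) (k : ℕ) : SS q 0 k = qbinom q 0 k := by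
  unfold SS
  rw [Finset.sum_eq_single 0]
  · simp [dd_zero, qb_zero]
  · intro j _ hne
    rw [qb_eq_zero q 0 (2 * j) (by omega)]
    ring
  · intro h
    exact absurd (Finset.mem_range.mpr (by omega)) h

lemma SS_one (q : R) (k : ℕ) : SS q 1 k = qbinom q 1 k := by
  unfold SS
  rw [Finset.sum_eq_single 0]
  · simp [dd_zero, qb_zero]
  · intro j _ hne
    rw [qb_eq_zero q 1 (2 * j) (by omega)]
    ring
  · intro h
    exact absurd (Finset.mem_range.mpr (by omega)) h

/-- Telescoping function. -/
def GG (q : R) (N k j : ℕ) : R :=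
  dd q j * (1 - q ^ (N + 1)) * q ^ (k + j + 1) * qbinom q N (2 * j)
    * qbinom q (N - 2 * j) (k - j)

lemma tele0 (q : R) (N k : ℕ) :
    dd q 0 * qbinom q (N + 2) (2 * 0) * qbinom q (N + 2 - 2 * 0) (k + 1 - 0)
      - q ^ (2 * k + 2) *
        (dd q 0 * qbinom q (N + 1) (2 * 0) * qbinom q (N + 1 - 2 * 0) (k + 1 - 0))
      - dd q 0 * qbinom q (N + 1) (2 * 0) * qbinom q (N + 1 - 2 * 0) (k - 0)
    = GG q N k 0 := by
  simp only [GG, Nat.mul_zero, Nat.sub_zero, dd_zero, qb_zero, mul_one, one_mul]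
  rw [qb_succ q (N + 1) k]
  linear_combination (q : R) ^ (k + 1) * absorbP q N k

lemma teleTop (q : R) (N k : ℕ) :
    dd q (k + 1) * qbinom q (N + 2) (2 * (k + 1)) *
        qbinom q (N + 2 - 2 * (k + 1)) (k + 1 - (k + 1))
      - q ^ (2 * k + 2) *
        (dd q (k + 1) * qbinom q (N + 1) (2 * (k + 1)) *
          qbinom q (N + 1 - 2 * (k + 1)) (k + 1 - (k + 1)))
    = -GG q N k k := by
  simp only [GG, Nat.sub_self, qb_zero, mul_one]
  rw [show 2 * (k + 1) = 2 * k + 1 + 1 from by omega]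
  rw [show N + 2 = N + 1 + 1 from rfl, qb_succ q (N + 1) (2 * k + 1)]
  rw [dd_succ q k]
  linear_combination (-(q ^ (2 * k + 1)) * dd q k) * absorbP q N (2 * k)

lemma teleStep (q : R) (N k m : ℕ) (hm : m + 1 ≤ k) :
    dd q (m + 1) * qbinom q (N + 2) (2 * (m + 1)) *
        qbinom q (N + 2 - 2 * (m + 1)) (k + 1 - (m + 1))
      - q ^ (2 * k + 2) *
        (dd q (m + 1) * qbinom q (N + 1) (2 * (m + 1)) *
          qbinom q (N + 1 - 2 * (m + 1)) (k + 1 - (m + 1)))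
      - dd q (m + 1) * qbinom q (N + 1) (2 * (m + 1)) *
          qbinom q (N + 1 - 2 * (m + 1)) (k - (m + 1))
    = GG q N k (m + 1) - GG q N k m := by
  obtain ⟨u, rfl⟩ : ∃ u, k = m + 1 + u := ⟨k - (m + 1), by omega⟩
  simp only [GG]
  rcases le_or_gt (2 * m + 2) N with hmain | hsmall
  · -- main case : N ≥ 2m+2
    obtain ⟨t, rfl⟩ : ∃ t, N = 2 * m + 2 + t := ⟨N - (2 * m + 2), by omega⟩
    simp only [show 2 * (m + 1) = 2 * m + 2 from by omega,
      show 2 * m + 2 + t + 2 - (2 * m + 2) = t + 2 from by omega,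
      show 2 * m + 2 + t + 1 - (2 * m + 2) = t + 1 from by omega,
      show 2 * m + 2 + t - (2 * m + 2) = t from by omega,
      show 2 * m + 2 + t - 2 * m = t + 2 from by omega,
      show m + 1 + u + 1 - (m + 1) = u + 1 from by omega,
      show m + 1 + u - (m + 1) = u from by omega,
      show m + 1 + u - m = u + 1 from by omega]
    have hA1 : qbinom q (2 * m + 2 + t + 2) (2 * m + 2)
        = qbinom q (2 * m + 2 + t + 1) (2 * m + 1)
          + q ^ (2 * m + 2) * qbinom q (2 * m + 2 + t + 1) (2 * m + 2) := by
      have h := qb_succ q (2 * m + 2 + t + 1) (2 * m + 1)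
      rw [show 2 * m + 2 + t + 1 + 1 = 2 * m + 2 + t + 2 from by omega,
        show 2 * m + 1 + 1 = 2 * m + 2 from by omega] at h
      exact h
    have hA2 : qbinom q (t + 2) (u + 1)
        = qbinom q (t + 1) u + q ^ (u + 1) * qbinom q (t + 1) (u + 1) := by
      have h := qb_succ q (t + 1) u
      rw [show t + 1 + 1 = t + 2 from by omega] at h
      exact h
    have hS2 : (1 - q ^ (2 * m + 2)) * qbinom q (2 * m + 2 + t + 1) (2 * m + 2)
        = (1 - q ^ (2 * m + 2 + t + 1)) * qbinom q (2 * m + 2 + t) (2 * m + 1) := by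
      have h := absorbP q (2 * m + 2 + t) (2 * m + 1)
      rw [show 2 * m + 1 + 1 = 2 * m + 2 from by omega] at h
      exact h
    have hS3 := absorbP q t u
    have hS4 : (1 - q ^ (t + 1)) * qbinom q (2 * m + 2 + t + 1) (2 * m + 2)
        = (1 - q ^ (2 * m + 2 + t + 1)) * qbinom q (2 * m + 2 + t) (2 * m + 2) := by
      have h := absorb2 q (2 * m + 2 + t) (2 * m + 2)
      rw [show 2 * m + 2 + t + 1 - (2 * m + 2) = t + 1 from by omega] at h
      exact h
    have hS5 := absorbP q (2 * m + 2 + t) (2 * m)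
    have hS7 : (1 - q ^ (2 * m + 1)) * qbinom q (2 * m + 2 + t) (2 * m + 1)
        = (1 - q ^ (2 * m + 2 + t)) * qbinom q (2 * m + 1 + t) (2 * m) := by
      have h := absorbP q (2 * m + 1 + t) (2 * m)
      rw [show 2 * m + 1 + t + 1 = 2 * m + 2 + t from by omega] at h
      exact h
    have hS8 : (1 - q ^ (u + 1)) * qbinom q (t + 2) (u + 1)
        = (1 - q ^ (t + 2)) * qbinom q (t + 1) u := by
      have h := absorbP q (t + 1) u
      rw [show t + 1 + 1 = t + 2 from by omega] at h
      exact h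
    have hS9 : (1 - q ^ (t + 2)) * qbinom q (2 * m + 2 + t) (2 * m)
        = (1 - q ^ (2 * m + 2 + t)) * qbinom q (2 * m + 1 + t) (2 * m) := by
      have h := absorb2 q (2 * m + 1 + t) (2 * m)
      rw [show 2 * m + 1 + t + 1 - 2 * m = t + 2 from by omega] at h
      rw [show 2 * m + 1 + t + 1 = 2 * m + 2 + t from by omega] at h
      exact h
    rw [dd_succ q m]
    linear_combination
      (-(q ^ (2 * m + 1) * (1 - q ^ (2 * m + 1))) * qbinom q (t + 2) (u + 1) * dd q m) * hA1
      + (-(q ^ (2 * m + 1) * (1 - q ^ (2 * m + 1))) * q ^ (2 * m + 2) *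
          qbinom q (2 * m + 2 + t + 1) (2 * m + 2) * dd q m) * hA2
      + ((q ^ (2 * m + 1) * (1 - q ^ (2 * m + 1))) * qbinom q (t + 1) u * dd q m) * hS2
      + (-(q ^ (2 * m + 1) * (1 - q ^ (2 * m + 1))) * q ^ (2 * m + u + 3) *
          qbinom q (2 * m + 2 + t + 1) (2 * m + 2) * dd q m) * hS3
      + (-(q ^ (2 * m + 1) * (1 - q ^ (2 * m + 1))) * q ^ (2 * m + u + 3) *
          qbinom q t u * dd q m) * hS4
      + (-(q ^ (2 * m + 1)) * qbinom q (t + 2) (u + 1) * dd q m) * hS5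
      + ((1 - q ^ (2 * m + 2 + t + 1)) * q ^ (2 * m + 1) * qbinom q (t + 1) u * dd q m) * hS7
      + (-((1 - q ^ (2 * m + 2 + t + 1)) * q ^ (2 * m + 1)) *
          qbinom q (2 * m + 2 + t) (2 * m) * dd q m) * hS8
      + (-((1 - q ^ (2 * m + 2 + t + 1)) * q ^ (2 * m + 1)) *
          qbinom q (t + 1) u * dd q m) * hS9
  · rcases Nat.lt_or_ge N (2 * m) with hA | hge
    · -- N < 2m : everything vanishes
      rw [qb_eq_zero q (N + 2) (2 * (m + 1)) (by omega),
        qb_eq_zero q (N + 1) (2 * (m + 1)) (by omega),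
        qb_eq_zero q N (2 * (m + 1)) (by omega),
        qb_eq_zero q N (2 * m) (by omega)]
      ring
    · rcases Nat.eq_or_lt_of_le hge with hB | hC
      · -- N = 2m
        obtain rfl : N = 2 * m := hB.symm
        rw [show 2 * m + 2 - 2 * (m + 1) = 0 from by omega,
          show m + 1 + u + 1 - (m + 1) = u + 1 from by omega,
          show 2 * m - 2 * m = 0 from by omega,
          show m + 1 + u - m = u + 1 from by omega,
          qb_eq_zero q (2 * m + 1) (2 * (m + 1)) (by omega),
          qb_eq_zero q (2 * m) (2 * (m + 1)) (by omega),
          qb_eq_zero q 0 (u + 1) (by omega)]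
        ring
      · -- N = 2m+1
        obtain rfl : N = 2 * m + 1 := by omega
        rw [show 2 * m + 1 + 2 - 2 * (m + 1) = 1 from by omega,
          show 2 * m + 1 + 1 - 2 * (m + 1) = 0 from by omega,
          show m + 1 + u + 1 - (m + 1) = u + 1 from by omega,
          show m + 1 + u - (m + 1) = u from by omega,
          show 2 * m + 1 - 2 * m = 1 from by omega,
          show m + 1 + u - m = u + 1 from by omega,
          qb_eq_zero q (2 * m + 1) (2 * (m + 1)) (by omega),
          qb_eq_zero q 0 (u + 1) (by omega)]
        rcases Nat.eq_zero_or_pos u with rfl | hu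
        · -- u = 0 : the nontrivial boundary case
          have h11 : qbinom q 1 1 = 1 := by
            rw [qb_succ q 0 0, qb_zero, qb_zero_row]
            ring
          rw [show (0 : ℕ) + 1 = 1 from rfl] at *
          rw [h11, qb_zero,
            show 2 * (m + 1) = 2 * m + 1 + 1 from by omega,
            show 2 * m + 1 + 2 = 2 * m + 1 + 1 + 1 from by omega,
            qb_succ q (2 * m + 1 + 1) (2 * m + 1)]
          have hP : (1 - q ^ (2 * m + 1)) * qbinom q (2 * m + 1 + 1) (2 * m + 1)
              = (1 - q ^ (2 * m + 1 + 1)) * qbinom q (2 * m + 1) (2 * m) :=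
            absorbP q (2 * m + 1) (2 * m)
          have habs : (1 - q ^ 1) * qbinom q (2 * m + 1) (2 * m)
              = (1 - q ^ (2 * m + 1)) := by
            have h := absorb2 q (2 * m) (2 * m)
            rw [show 2 * m + 1 - 2 * m = 1 from by omega, qb_self] at h
            linear_combination h
          rw [qb_self q (2 * m + 1 + 1), dd_succ q m]
          linear_combination (-(q ^ (2 * m + 1)) * dd q m) * hP
            + (-(q ^ (2 * m + 1)) * dd q m * (1 - q ^ (2 * m + 1 + 1))) * habs
        · -- u ≥ 1 : all second factors vanish
          rw [qb_eq_zero q 1 (u + 1) (by omega), qb_eq_zero q 0 u (by omega)]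
          ring

lemma SS_rec (q : R) (n k : ℕ) :
    SS q (n + 1) (k + 1) = SS q n k + q ^ (2 * k + 2) * SS q n (k + 1) := by
  rcases n with _ | N
  · rw [SS_one, SS_zero, SS_zero]
    cases k with
    | zero =>
      rw [qb_succ q 0 0, qb_zero, qb_zero_row]
      ring
    | succ k =>
      rw [qb_eq_zero q 1 (k + 2) (by omega), qb_zero_row, qb_zero_row]
      ring
  · show SS q (N + 2) (k + 1) = SS q (N + 1) k + q ^ (2 * k + 2) * SS q (N + 1) (k + 1)
    have hGG : ∀ M : ℕ, M ≤ k →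
        (∑ j ∈ range (M + 1),
          (dd q j * qbinom q (N + 2) (2 * j) * qbinom q (N + 2 - 2 * j) (k + 1 - j)
            - q ^ (2 * k + 2) *
              (dd q j * qbinom q (N + 1) (2 * j) * qbinom q (N + 1 - 2 * j) (k + 1 - j))
            - dd q j * qbinom q (N + 1) (2 * j) * qbinom q (N + 1 - 2 * j) (k - j)))
        = GG q N k M := by
      intro M
      induction M with
      | zero =>
        intro _
        rw [Finset.sum_range_one]
        exact tele0 q N k
      | succ M ih =>
        intro hM
        rw [Finset.sum_range_succ, ih (by omega)]
        have h := teleStep q N k M (by omega)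
        linear_combination h
    have h1 := hGG k le_rfl
    rw [Finset.sum_sub_distrib, Finset.sum_sub_distrib, ← Finset.mul_sum] at h1
    have h2 := teleTop q N k
    simp only [SS]
    simp only [Finset.sum_range_succ] at h1 ⊢
    linear_combination h1 + h2

lemma TT (q : R) : ∀ n k : ℕ, qbinom (q ^ 2) n k = SS q n k := by
  intro n
  induction n with
  | zero =>
    intro k
    rw [SS_zero]
    cases k with
    | zero => rfl
    | succ k => rfl
  | succ n ih =>
    intro k
    cases k with
    | zero =>
      rw [qb_zero]
      simp [SS, Finset.sum_range_one, dd_zero, qb_zero]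
    | succ k =>
      rw [qb_succ (q ^ 2) n k, ih k, ih (k + 1), SS_rec q n k]
      ring

end Stmt11Aux

open Stmt11Aux in
theorem stmt11 {R : Type*} [CommRing R] (s q : R) (n : ℕ) :
    rs n s (q ^ 2) =
      ∑ j ∈ Finset.range (n / 2 + 1),
        (-1 : R) ^ j * q ^ (j ^ 2) * (∏ i ∈ Finset.range j, (1 - q ^ (2 * i + 1))) *
          qbinom q n (2 * j) * s ^ j * rs (n - 2 * j) s q := by
  calc rs n s (q ^ 2)
      = ∑ k ∈ Finset.range (n + 1), SS q n k * s ^ k := by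
        rw [rs]
        exact Finset.sum_congr rfl fun k _ => by rw [TT q n k]
    _ = ∑ k ∈ Finset.range (n + 1), ∑ j ∈ Finset.range (k + 1),
          dd q j * qbinom q n (2 * j) * qbinom q (n - 2 * j) (k - j) * s ^ k := by
        simp only [SS, Finset.sum_mul]
    _ = ∑ j ∈ Finset.range (n + 1), ∑ k ∈ Finset.Ico j (n + 1),
          dd q j * qbinom q n (2 * j) * qbinom q (n - 2 * j) (k - j) * s ^ k :=
        Finset.sum_comm' (fun k j => by
          simp only [Finset.mem_range, Finset.mem_Ico]
          omega)
    _ = ∑ j ∈ Finset.range (n + 1), dd q j * qbinom q n (2 * j) *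
          (∑ i ∈ Finset.range (n + 1 - j), qbinom q (n - 2 * j) i * s ^ i) * s ^ j := by
        refine Finset.sum_congr rfl fun j _ => ?_
        rw [Finset.sum_Ico_eq_sum_range, Finset.mul_sum, Finset.sum_mul]
        refine Finset.sum_congr rfl fun i _ => ?_
        rw [Nat.add_sub_cancel_left, pow_add]
        ring
    _ = ∑ j ∈ Finset.range (n + 1), dd q j * qbinom q n (2 * j) * s ^ j *
          rs (n - 2 * j) s q := by
        refine Finset.sum_congr rfl fun j _ => ?_
        by_cases h2j : 2 * j ≤ n
        · rw [rs]
          have hext : ∑ i ∈ Finset.range (n - 2 * j + 1), qbinom q (n - 2 * j) i * s ^ i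
              = ∑ i ∈ Finset.range (n + 1 - j), qbinom q (n - 2 * j) i * s ^ i :=
            Finset.sum_subset (Finset.range_subset_range.mpr (by omega)) (fun i hi hi' => by
              rw [qb_eq_zero q (n - 2 * j) i (by
                simp only [Finset.mem_range] at hi hi'
                omega)]
              ring)
          rw [← hext]
          ring
        · rw [qb_eq_zero q n (2 * j) (by omega)]
          ring
    _ = ∑ j ∈ Finset.range (n / 2 + 1), dd q j * qbinom q n (2 * j) * s ^ j *
          rs (n - 2 * j) s q :=
        (Finset.sum_subset (Finset.range_subset_range.mpr (show n / 2 + 1 ≤ n + 1 by omega))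
          (fun j hj hj' => by
            rw [qb_eq_zero q n (2 * j) (by
              simp only [Finset.mem_range] at hj hj'
              omega)]
            ring)).symm
    _ = ∑ j ∈ Finset.range (n / 2 + 1),
          (-1 : R) ^ j * q ^ (j ^ 2) * (∏ i ∈ Finset.range j, (1 - q ^ (2 * i + 1))) *
            qbinom q n (2 * j) * s ^ j * rs (n - 2 * j) s q :=
        Finset.sum_congr rfl fun j _ => by rw [dd]
end

section
/- For positive integers k and nonnegative integers m, n: the limit as q tends to 1 of (sum_{j=0}^{2n} (-1)^j q^{mj} (2n choose j)_{q^k}) / (q;q^2)_n equals k^n, and the limit as q tends to 1 of (sum_{j=0}^{2n+1} (-1)^j q^{mj} (2n+1 choose j)_{q^k}) / (q;q^2)_{n+1} equals m * k^n. -/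
open Finset

open Filter Topology


namespace Stmt19Aux

variable {R : Type*} [CommRing R]

lemma qbinom_zero_right (q : R) (n : ℕ) : qbinom q n 0 = 1 := by cases n <;> rfl

lemma qbinom_zero_succ (q : R) (j : ℕ) : qbinom q 0 (j+1) = 0 := rfl

lemma qbinom_succ_succ (q : R) (n j : ℕ) :
    qbinom q (n+1) (j+1) = qbinom q n j + q ^ (j+1) * qbinom q n (j+1) := rfl

lemma qbinom_eq_zero (q : R) : ∀ n j, n < j → qbinom q n j = 0 := by
  intro n
  induction n with
  | zero =>
    intro j hj
    match j, hj with
    | j+1, _ => exact qbinom_zero_succ q j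
  | succ n ih =>
    intro j hj
    match j, hj with
    | j+1, hj =>
      rw [qbinom_succ_succ, ih j (by omega), ih (j+1) (by omega)]
      ring

lemma qbinom_one_right (q : R) : ∀ n, qbinom q n 1 = ∑ i ∈ range n, q ^ i := by
  intro n
  induction n with
  | zero => simpa using qbinom_zero_succ q 0
  | succ n ih =>
    have h : qbinom q (n+1) 1 = qbinom q n 0 + q ^ 1 * qbinom q n 1 := qbinom_succ_succ q n 0
    rw [h, qbinom_zero_right, ih, Finset.sum_range_succ' (fun i => q ^ i) n,
      Finset.mul_sum]
    simp only [pow_zero, pow_succ]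
    rw [add_comm]
    congr 1
    apply Finset.sum_congr rfl
    intro i _
    ring

lemma qbinom_pascal2 (q : R) :
    ∀ n j, qbinom q (n+1) (j+1) = q^(n-j) * qbinom q n j + qbinom q n (j+1) := by
  intro n
  induction n with
  | zero =>
    intro j
    match j with
    | 0 => simp [qbinom_succ_succ, qbinom_zero_right, qbinom_zero_succ]
    | j+1 => simp [qbinom_succ_succ, qbinom_zero_succ]
  | succ n ih =>
    intro j
    match j with
    | 0 =>
      rw [qbinom_one_right, qbinom_one_right, qbinom_zero_right, Finset.sum_range_succ]
      simp only [Nat.sub_zero]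
      ring
    | j+1 =>
      rw [qbinom_succ_succ q (n+1) (j+1)]
      conv_lhs => rw [ih j, ih (j+1)]
      conv_rhs => rw [qbinom_succ_succ q n j, qbinom_succ_succ q n (j+1)]
      by_cases h : j < n
      · have h1 : n - j = (n - (j+1)) + 1 := by omega
        have h2 : (n+1) - (j+1) = n - j := by omega
        rw [h2, h1]
        ring
      · have hb : qbinom q n (j+1) = 0 := qbinom_eq_zero q n (j+1) (by omega)
        have hc : qbinom q n (j+1+1) = 0 := qbinom_eq_zero q n (j+2) (by omega)
        rw [hb, hc]
        have h2 : (n+1) - (j+1) = n - j := by omega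
        rw [h2]
        ring

noncomputable def Sf (x Q : ℝ) (N : ℕ) : ℝ := ∑ j ∈ range (N+1), (-1)^j * x^j * qbinom Q N j
noncomputable def Tf (x Q : ℝ) (N : ℕ) : ℝ :=
  ∑ j ∈ range (N+1), (-1)^j * Q^(N-j) * x^j * qbinom Q N j

lemma Sf_zero (x Q : ℝ) : Sf x Q 0 = 1 := by simp [Sf, qbinom_zero_right]
lemma Tf_zero (x Q : ℝ) : Tf x Q 0 = 1 := by simp [Tf, qbinom_zero_right]

lemma shift_sum (x Q : ℝ) (N : ℕ) :
    (∑ i ∈ range (N+1), (-1:ℝ)^(i+1) * x^(i+1) * qbinom Q N (i+1)) = Sf x Q N - 1 := by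
  have A := Finset.sum_range_succ' (fun j => (-1:ℝ)^j * x^j * qbinom Q N j) (N+1)
  have B := Finset.sum_range_succ (fun j => (-1:ℝ)^j * x^j * qbinom Q N j) (N+1)
  have hz : qbinom Q N (N+1) = 0 := qbinom_eq_zero Q N (N+1) (by omega)
  simp only [hz, qbinom_zero_right, pow_zero, mul_one, one_mul, mul_zero, add_zero] at A B
  simp only [Sf]
  linarith [A, B]

lemma Sf_succ (x Q : ℝ) (N : ℕ) : Sf x Q (N+1) = Sf x Q N - x * Tf x Q N := by
  have h1 : ∀ i ∈ range (N+1), ((-1:ℝ))^(i+1) * x^(i+1) * qbinom Q (N+1) (i+1)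
      = -(x * ((-1)^i * Q^(N-i) * x^i * qbinom Q N i))
        + ((-1)^(i+1) * x^(i+1) * qbinom Q N (i+1)) := by
    intro i _; rw [qbinom_pascal2]; ring
  calc Sf x Q (N+1)
      = (∑ i ∈ range (N+1), (-1:ℝ)^(i+1) * x^(i+1) * qbinom Q (N+1) (i+1)) + 1 := by
        simp only [Sf]
        rw [Finset.sum_range_succ' (fun j => (-1:ℝ)^j * x^j * qbinom Q (N+1) j) (N+1)]
        simp [qbinom_zero_right]
    _ = (∑ i ∈ range (N+1), (-(x * ((-1:ℝ)^i * Q^(N-i) * x^i * qbinom Q N i))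
          + ((-1)^(i+1) * x^(i+1) * qbinom Q N (i+1)))) + 1 := by
        rw [Finset.sum_congr rfl h1]
    _ = (-(x * Tf x Q N) + (Sf x Q N - 1)) + 1 := by
        rw [Finset.sum_add_distrib, shift_sum, Finset.sum_neg_distrib, ← Finset.mul_sum]
        simp only [Tf]
    _ = Sf x Q N - x * Tf x Q N := by ring

lemma Tf_succ (x Q : ℝ) (N : ℕ) :
    Tf x Q (N+1) = -(x * Tf x Q N) + Q^(N+1) * Sf x Q N := by
  have h1 : ∀ i ∈ range (N+1), ((-1:ℝ))^(i+1) * Q^(N+1-(i+1)) * x^(i+1) * qbinom Q (N+1) (i+1)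
      = -(x * ((-1)^i * Q^(N-i) * x^i * qbinom Q N i))
        + Q^(N+1) * ((-1)^(i+1) * x^(i+1) * qbinom Q N (i+1)) := by
    intro i hi
    simp only [Finset.mem_range] at hi
    rw [qbinom_succ_succ]
    have e1 : N + 1 - (i+1) = N - i := by omega
    have e2 : Q^(N-i) * Q^(i+1) = Q^(N+1) := by
      rw [← pow_add]
      congr 1
      omega
    rw [e1]
    calc (-1:ℝ)^(i+1) * Q^(N-i) * x^(i+1) * (qbinom Q N i + Q^(i+1) * qbinom Q N (i+1))
        = -(x * ((-1)^i * Q^(N-i) * x^i * qbinom Q N i))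
          + (Q^(N-i) * Q^(i+1)) * ((-1)^(i+1) * x^(i+1) * qbinom Q N (i+1)) := by ring
      _ = _ := by rw [e2]
  calc Tf x Q (N+1)
      = (∑ i ∈ range (N+1), (-1:ℝ)^(i+1) * Q^(N+1-(i+1)) * x^(i+1) * qbinom Q (N+1) (i+1))
          + Q^(N+1) := by
        simp only [Tf]
        rw [Finset.sum_range_succ'
          (fun j => (-1:ℝ)^j * Q^(N+1-j) * x^j * qbinom Q (N+1) j) (N+1)]
        simp [qbinom_zero_right]
    _ = (∑ i ∈ range (N+1), (-(x * ((-1:ℝ)^i * Q^(N-i) * x^i * qbinom Q N i))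
          + Q^(N+1) * ((-1)^(i+1) * x^(i+1) * qbinom Q N (i+1)))) + Q^(N+1) := by
        rw [Finset.sum_congr rfl h1]
    _ = (-(x * Tf x Q N) + Q^(N+1) * (Sf x Q N - 1)) + Q^(N+1) := by
        rw [Finset.sum_add_distrib, Finset.sum_neg_distrib, ← Finset.mul_sum,
          ← Finset.mul_sum, shift_sum]
        simp only [Tf]
    _ = -(x * Tf x Q N) + Q^(N+1) * Sf x Q N := by ring

lemma Sf_rec (x Q : ℝ) (N : ℕ) :
    Sf x Q (N+2) = (1-x) * Sf x Q (N+1) + (1 - Q^(N+1)) * x * Sf x Q N := by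
  have e1 := Sf_succ x Q (N+1)
  have e2 := Tf_succ x Q N
  have e3 := Sf_succ x Q N
  linear_combination e1 - x * e2 + x * e3

lemma Sf_one (x Q : ℝ) : Sf x Q 1 = 1 - x := by
  rw [Sf_succ, Sf_zero, Tf_zero]
  ring




lemma aux_ratio (a b : ℕ) (hb : 0 < b) :
    Tendsto (fun q : ℝ => (1 - q ^ a) / (1 - q ^ b)) (𝓝[≠] (1:ℝ)) (𝓝 ((a : ℝ) / b)) := by
  have hnum : Tendsto (fun q : ℝ => ∑ i ∈ range a, q ^ i) (𝓝 (1:ℝ)) (𝓝 ((a:ℝ))) := by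
    have := (continuous_finset_sum (range a) (fun i _ => continuous_pow i)).tendsto (1:ℝ)
    simpa using this
  have hden : Tendsto (fun q : ℝ => ∑ i ∈ range b, q ^ i) (𝓝 (1:ℝ)) (𝓝 ((b:ℝ))) := by
    have := (continuous_finset_sum (range b) (fun i _ => continuous_pow i)).tendsto (1:ℝ)
    simpa using this
  have h1 := (hnum.div hden (by exact_mod_cast hb.ne')).mono_left
    (nhdsWithin_le_nhds : 𝓝[≠] (1:ℝ) ≤ 𝓝 1)
  apply h1.congr'
  filter_upwards [self_mem_nhdsWithin] with q hq
  simp only [Set.mem_compl_iff, Set.mem_singleton_iff] at hq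
  have hq1 : (1:ℝ) - q ≠ 0 := sub_ne_zero.2 fun h => hq h.symm
  simp only [Pi.div_apply]
  have e : ∀ c : ℕ, 1 - q ^ c = (∑ i ∈ range c, q ^ i) * (1 - q) := by
    intro c
    have h := geom_sum_mul q c
    linear_combination h
  rw [e a, e b, mul_div_mul_right _ _ hq1]

lemma aux_pow (m : ℕ) : Tendsto (fun q : ℝ => q ^ m) (𝓝[≠] (1:ℝ)) (𝓝 1) := by
  have := ((continuous_pow m).tendsto (1:ℝ)).mono_left
    (nhdsWithin_le_nhds : 𝓝[≠] (1:ℝ) ≤ 𝓝 1)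
  simpa using this

lemma aux_one_sub (m : ℕ) : Tendsto (fun q : ℝ => 1 - q ^ m) (𝓝[≠] (1:ℝ)) (𝓝 0) := by
  have := (tendsto_const_nhds (x := (1:ℝ)) (f := 𝓝[≠] (1:ℝ))).sub (aux_pow m)
  simpa using this

noncomputable def Dfun (n : ℕ) (q : ℝ) : ℝ := ∏ i ∈ range n, (1 - q^(2*i+1))

lemma Dfun_succ (n : ℕ) (q : ℝ) : Dfun (n+1) q = Dfun n q * (1 - q^(2*n+1)) := by
  simp [Dfun, Finset.prod_range_succ]

lemma main_ind (k m : ℕ) : ∀ n : ℕ,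
    Tendsto (fun q : ℝ => Sf (q^m) (q^k) (2*n) / Dfun n q) (𝓝[≠] (1:ℝ)) (𝓝 ((k:ℝ)^n)) ∧
    Tendsto (fun q : ℝ => Sf (q^m) (q^k) (2*n+1) / Dfun (n+1) q) (𝓝[≠] (1:ℝ))
      (𝓝 ((m:ℝ) * (k:ℝ)^n)) := by
  intro n
  induction n with
  | zero =>
    constructor
    · have h : (fun q : ℝ => Sf (q^m) (q^k) (2*0) / Dfun 0 q) = fun _ => 1 := by
        funext q; simp [Sf_zero, Dfun]
      rw [h]
      simpa using tendsto_const_nhds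
    · have heq : (fun q : ℝ => Sf (q^m) (q^k) (2*0+1) / Dfun (0+1) q)
          = fun q : ℝ => (1 - q^m) / (1 - q^1) := by
        funext q; simp [Sf_one, Dfun]
      rw [heq]
      have := aux_ratio m 1 one_pos
      simpa using this
  | succ n ih =>
    obtain ⟨ihe, iho⟩ := ih
    have heven : Tendsto (fun q : ℝ => Sf (q^m) (q^k) (2*(n+1)) / Dfun (n+1) q)
        (𝓝[≠] (1:ℝ)) (𝓝 ((k:ℝ)^(n+1))) := by
      have heq : ∀ q : ℝ, Sf (q^m) (q^k) (2*(n+1)) / Dfun (n+1) q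
          = (1 - q^m) * (Sf (q^m) (q^k) (2*n+1) / Dfun (n+1) q)
            + ((1 - q^(k*(2*n+1))) / (1 - q^(2*n+1)) * q^m)
              * (Sf (q^m) (q^k) (2*n) / Dfun n q) := by
        intro q
        have hp : ((q:ℝ)^k)^(2*n+1) = q^(k*(2*n+1)) := (pow_mul q k (2*n+1)).symm
        have hS : Sf (q^m) (q^k) (2*(n+1))
            = (1 - q^m) * Sf (q^m) (q^k) (2*n+1)
              + (1 - q^(k*(2*n+1))) * (q^m) * Sf (q^m) (q^k) (2*n) := by
          have h := Sf_rec (q^m) (q^k) (2*n)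
          rw [hp] at h
          exact h
        rw [hS, Dfun_succ n]
        generalize (q:ℝ)^m = x
        generalize Sf x (q^k) (2*n+1) = A
        generalize Sf x (q^k) (2*n) = B
        generalize (1:ℝ) - q^(k*(2*n+1)) = c
        generalize Dfun n q = D
        generalize (1:ℝ) - q^(2*n+1) = d
        ring
      have T1 := (aux_one_sub m).mul iho
      have T2 := ((aux_ratio (k*(2*n+1)) (2*n+1) (by omega)).mul (aux_pow m)).mul ihe
      have hT := T1.add T2
      rw [show (0 * ((m:ℝ) * (k:ℝ)^n)
          + (((k*(2*n+1) : ℕ) : ℝ) / ((2*n+1 : ℕ) : ℝ) * 1) * (k:ℝ)^n) = (k:ℝ)^(n+1) by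
        have hne : ((2*n+1 : ℕ) : ℝ) ≠ 0 := by positivity
        field_simp
        push_cast
        ring] at hT
      exact hT.congr fun q => (heq q).symm
    refine ⟨heven, ?_⟩
    have heq : ∀ q : ℝ, Sf (q^m) (q^k) (2*(n+1)+1) / Dfun (n+1+1) q
        = ((1 - q^m) / (1 - q^(2*(n+1)+1)))
            * (Sf (q^m) (q^k) (2*(n+1)) / Dfun (n+1) q)
          + ((1 - q^(k*(2*n+2))) / (1 - q^(2*(n+1)+1)) * q^m)
            * (Sf (q^m) (q^k) (2*n+1) / Dfun (n+1) q) := by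
      intro q
      have hp : ((q:ℝ)^k)^(2*n+1+1) = q^(k*(2*n+2)) := by
        rw [← pow_mul]
      have hS : Sf (q^m) (q^k) (2*(n+1)+1)
          = (1 - q^m) * Sf (q^m) (q^k) (2*(n+1))
            + (1 - q^(k*(2*n+2))) * (q^m) * Sf (q^m) (q^k) (2*n+1) := by
        have h := Sf_rec (q^m) (q^k) (2*n+1)
        rw [hp] at h
        exact h
      rw [hS, Dfun_succ (n+1)]
      generalize (q:ℝ)^m = x
      generalize Sf x (q^k) (2*(n+1)) = A
      generalize Sf x (q^k) (2*n+1) = B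
      generalize (1:ℝ) - q^(k*(2*n+2)) = c
      generalize Dfun (n+1) q = D
      generalize (1:ℝ) - q^(2*(n+1)+1) = d
      ring
    have T1 := (aux_ratio m (2*(n+1)+1) (by omega)).mul heven
    have T2 := ((aux_ratio (k*(2*n+2)) (2*(n+1)+1) (by omega)).mul (aux_pow m)).mul iho
    have hT := T1.add T2
    rw [show ((m : ℝ) / ((2*(n+1)+1 : ℕ) : ℝ) * (k:ℝ)^(n+1)
        + (((k*(2*n+2) : ℕ) : ℝ) / ((2*(n+1)+1 : ℕ) : ℝ) * 1) * ((m:ℝ) * (k:ℝ)^n))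
        = (m:ℝ) * (k:ℝ)^(n+1) by
      have hne : ((2*(n+1)+1 : ℕ) : ℝ) ≠ 0 := by positivity
      field_simp
      push_cast
      ring] at hT
    exact hT.congr fun q => (heq q).symm


end Stmt19Aux

theorem stmt19 (k : ℕ) (hk : 1 ≤ k) (m n : ℕ) :
    Filter.Tendsto
      (fun q : ℝ =>
        (∑ j ∈ Finset.range (2 * n + 1), (-1 : ℝ) ^ j * q ^ (m * j) * qbinom (q ^ k) (2 * n) j) /
          ∏ i ∈ Finset.range n, (1 - q ^ (2 * i + 1)))
      (𝓝[≠] (1 : ℝ)) (𝓝 ((k : ℝ) ^ n)) ∧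
    Filter.Tendsto
      (fun q : ℝ =>
        (∑ j ∈ Finset.range (2 * n + 2),
            (-1 : ℝ) ^ j * q ^ (m * j) * qbinom (q ^ k) (2 * n + 1) j) /
          ∏ i ∈ Finset.range (n + 1), (1 - q ^ (2 * i + 1)))
      (𝓝[≠] (1 : ℝ)) (𝓝 ((m : ℝ) * (k : ℝ) ^ n)) := by
  obtain ⟨he, ho⟩ := Stmt19Aux.main_ind k m n
  constructor
  · apply he.congr
    intro q
    simp only [Stmt19Aux.Sf, Stmt19Aux.Dfun, ← pow_mul]
  · apply ho.congr
    intro q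
    simp only [Stmt19Aux.Sf, Stmt19Aux.Dfun, ← pow_mul]
end
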